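/- arXiv:1811.01011 — 2 statements merged into one kernel-verified Lean document; each statement's English description precedes it below -/
import Mathlib

section
/- For an n-tuple of partitions λ = (λ¹,...,λⁿ) and a variable z of color i, the product Π_{□ ∈ λ, col □ = i} ζ(z/χ_□) · Π_{□ ∈ λ, col □ = i+1} ζ(z/χ_□) · (u_{i+1}/q - z q/u_{i+1}) equals the ratio of Π over inner corners □ of λ of color i+1 of (√χ_□/q - zq/√χ_□) divided by Π over outer corners □ of λ of color i of (√χ_□ - z/√χ_□). -/
namespace Statement8

variable {K : Type*} [Field K]

/-- The "square root of the weight" `√χ_□ = u_k q^x q̄^{(y+k-c)/n}` of the box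
`□ = (x,y)` of the partition `λᵏ`, viewed as a variable of color `c ≡ y + k mod n`. -/
noncomputable def sqw (n : ℕ) (u : ℕ → K) (q qb : K) (k x y c : ℕ) : K :=
  u k * q ^ x * qb ^ (((y : ℤ) + (k : ℤ) - (c : ℤ)) / (n : ℤ))

noncomputable def F (q z c : K) (a : ℕ) : K :=
  q ^ a * (z * q * q - c ^ 2) / (z * q * q - c ^ 2 * q ^ (2 * a))

noncomputable def cc (n : ℕ) (u : ℕ → K) (qb : K) (j k y : ℕ) : K :=
  u k * qb ^ (((y : ℤ) + (k : ℤ) - (j : ℤ)) / (n : ℤ))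

lemma sub_ne_of (q z c : K) (hq : q ≠ 0)
    (hz : ∀ x : ℕ, z * q * q ≠ c ^ 2 * q ^ (2 * x)) (x : ℕ) :
    z - c ^ 2 * q ^ (2 * x) ≠ 0 := by
  intro h
  apply hz (x + 1)
  have hz' : z = c ^ 2 * q ^ (2 * x) := sub_eq_zero.mp h
  rw [hz']
  ring

lemma tele (q z c : K) (hq : q ≠ 0)
    (hz : ∀ x : ℕ, z * q * q ≠ c ^ 2 * q ^ (2 * x)) (a : ℕ) :
    ∏ x ∈ Finset.range a,
      (z * q - c ^ 2 * q ^ (2 * x) * q⁻¹) / (z - c ^ 2 * q ^ (2 * x)) = F q z c a := by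
  induction a with
  | zero =>
      simp only [Finset.range_zero, Finset.prod_empty, F, pow_zero, mul_zero, one_mul, mul_one]
      exact (div_self (sub_ne_zero.2 (by simpa using hz 0))).symm
  | succ a ih =>
      rw [Finset.prod_range_succ, ih]
      have h1 : z * q * q - c ^ 2 * q ^ (2 * a) ≠ 0 := sub_ne_zero.2 (hz a)
      have h2 : z * q * q - c ^ 2 * q ^ (2 * (a + 1)) ≠ 0 := sub_ne_zero.2 (hz (a + 1))
      have h3 : z - c ^ 2 * q ^ (2 * a) ≠ 0 := sub_ne_of q z c hq hz a
      simp only [F]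
      rw [div_mul_div_comm, div_eq_div_iff (mul_ne_zero h1 h3) h2]
      field_simp
      ring

lemma F_ne (q z c : K) (hq : q ≠ 0)
    (hz : ∀ x : ℕ, z * q * q ≠ c ^ 2 * q ^ (2 * x)) (a : ℕ) : F q z c a ≠ 0 := by
  have h1 : z * q * q - c ^ 2 ≠ 0 := sub_ne_zero.2 (by simpa using hz 0)
  have h2 : z * q * q - c ^ 2 * q ^ (2 * a) ≠ 0 := sub_ne_zero.2 (hz a)
  exact div_ne_zero (mul_ne_zero (pow_ne_zero _ hq) h1) h2

lemma F_zero (q z c : K) (hq : q ≠ 0)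
    (hz : ∀ x : ℕ, z * q * q ≠ c ^ 2 * q ^ (2 * x)) : F q z c 0 = 1 := by
  simp only [F, pow_zero, one_mul, mul_zero, mul_one]
  exact div_self (sub_ne_zero.2 (by simpa using hz 0))

lemma tele' (q z c : K) (hq : q ≠ 0)
    (hz : ∀ x : ℕ, z * q * q ≠ c ^ 2 * q ^ (2 * x)) (a : ℕ) :
    ∏ x ∈ Finset.range a,
      (z - c ^ 2 * q ^ (2 * x)) / (z * q - c ^ 2 * q ^ (2 * x) * q⁻¹) = (F q z c a)⁻¹ := by
  rw [← tele q z c hq hz a, ← Finset.prod_inv_distrib]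
  exact Finset.prod_congr rfl fun x _ => (inv_div _ _).symm

lemma outer_ne (q z c : K) (hq : q ≠ 0) (hc : c ≠ 0)
    (hz : ∀ x : ℕ, z * q * q ≠ c ^ 2 * q ^ (2 * x)) (x : ℕ) :
    c * q ^ x - z * (c * q ^ x)⁻¹ ≠ 0 := by
  have h5 : c * q ^ x ≠ 0 := mul_ne_zero hc (pow_ne_zero _ hq)
  have hid : c * q ^ x - z * (c * q ^ x)⁻¹ = (c ^ 2 * q ^ (2 * x) - z) / (c * q ^ x) := by
    field_simp
    ring
  rw [hid]
  refine div_ne_zero (fun h => sub_ne_of q z c hq hz x ?_) h5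
  rw [sub_eq_zero] at h ⊢
  exact h.symm

lemma pair (q z c : K) (hq : q ≠ 0) (hc : c ≠ 0)
    (hz : ∀ x : ℕ, z * q * q ≠ c ^ 2 * q ^ (2 * x)) {a b : ℕ} (hba : b ≤ a) :
    F q z c a * (F q z c b)⁻¹ =
      if b < a then
        (c * q ^ b * q⁻¹ - z * q * (c * q ^ b)⁻¹) / (c * q ^ (a - 1) - z * (c * q ^ (a - 1))⁻¹)
      else 1 := by
  rcases lt_or_eq_of_le hba with h | h
  · obtain ⟨a', rfl⟩ : ∃ a', a = a' + 1 := ⟨a - 1, by omega⟩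
    rw [if_pos h, Nat.add_sub_cancel]
    have h1 : z * q * q - c ^ 2 * q ^ (2 * (a' + 1)) ≠ 0 := sub_ne_zero.2 (hz (a' + 1))
    have h2 : z * q * q - c ^ 2 * q ^ (2 * b) ≠ 0 := sub_ne_zero.2 (hz b)
    have h0 : z * q * q - c ^ 2 ≠ 0 := sub_ne_zero.2 (by simpa using hz 0)
    have h3 : z - c ^ 2 * q ^ (2 * a') ≠ 0 := sub_ne_of q z c hq hz a'
    have h4 := outer_ne q z c hq hc hz a'
    have h5 : c * q ^ a' ≠ 0 := mul_ne_zero hc (pow_ne_zero _ hq)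
    have h6 : c * q ^ b ≠ 0 := mul_ne_zero hc (pow_ne_zero _ hq)
    have hin : c * q ^ b * q⁻¹ - z * q * (c * q ^ b)⁻¹ =
        (c ^ 2 * q ^ (2 * b) - z * q * q) / (q * (c * q ^ b)) := by
      field_simp; ring
    have hout : c * q ^ a' - z * (c * q ^ a')⁻¹ = (c ^ 2 * q ^ (2 * a') - z) / (c * q ^ a') := by
      field_simp; ring
    have h7 : c ^ 2 * q ^ (2 * a') - z ≠ 0 := by
      rw [sub_ne_zero] at h3 ⊢; exact h3.symm
    rw [hin, hout, div_div_div_eq]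
    simp only [F]
    rw [inv_div, div_mul_div_comm, div_eq_div_iff (mul_ne_zero h1 (mul_ne_zero (pow_ne_zero _ hq) h0))
      (mul_ne_zero (mul_ne_zero hq h6) h7)]
    ring
  · subst h
    rw [if_neg (lt_irrefl b)]
    exact mul_inv_cancel₀ (F_ne q z c hq hz b)

lemma rowz (q z c : K) (hq : q ≠ 0) (hc : c ≠ 0)
    (hz : ∀ x : ℕ, z * q * q ≠ c ^ 2 * q ^ (2 * x)) (b : ℕ) :
    (F q z c b)⁻¹ * (c * q⁻¹ - z * q * c⁻¹) =
      c * q ^ b * q⁻¹ - z * q * (c * q ^ b)⁻¹ := by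
  have h0 : z * q * q - c ^ 2 ≠ 0 := sub_ne_zero.2 (by simpa using hz 0)
  have h2 : z * q * q - c ^ 2 * q ^ (2 * b) ≠ 0 := sub_ne_zero.2 (hz b)
  simp only [F]
  rw [inv_div, div_mul_eq_mul_div, div_eq_iff (mul_ne_zero (pow_ne_zero _ hq) h0)]
  field_simp
  ring

lemma sqw_eq (n : ℕ) (u : ℕ → K) (q qb : K) (k x y j : ℕ) :
    sqw n u q qb k x y j = cc n u qb j k y * q ^ x := by
  simp only [sqw, cc]; ring

lemma sqw_sq (n : ℕ) (u : ℕ → K) (q qb : K) (k x y j : ℕ) :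
    (sqw n u q qb k x y j) ^ 2 = (cc n u qb j k y) ^ 2 * q ^ (2 * x) := by
  rw [sqw_eq, mul_pow, pow_mul]; ring

lemma cc_succ (n : ℕ) (u : ℕ → K) (qb : K) (j k y : ℕ) :
    cc n u qb (j + 1) k (y + 1) = cc n u qb j k y := by
  have h : ((y + 1 : ℕ) : ℤ) + (k : ℤ) - ((j + 1 : ℕ) : ℤ) = (y : ℤ) + (k : ℤ) - (j : ℤ) := by
    push_cast; ring
  simp only [cc, h]

lemma mod_succ_iff (n y k i : ℕ) :
    (y + 1 + k) % n = (i + 1) % n ↔ (y + k) % n = i % n := by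
  have e : y + 1 + k = (y + k) + 1 := by omega
  constructor
  · intro h
    rw [e] at h
    exact Nat.ModEq.add_right_cancel' 1 h
  · intro h
    rw [e]
    exact Nat.ModEq.add_right 1 h

lemma mod_inj (n : ℕ) (hn : 0 < n) {a b : ℕ} (ha1 : 1 ≤ a) (ha2 : a ≤ n)
    (hb1 : 1 ≤ b) (hb2 : b ≤ n) (h : a % n = b % n) : a = b := by
  rcases Nat.lt_or_ge a n with h1 | h1 <;> rcases Nat.lt_or_ge b n with h2 | h2
  · rwa [Nat.mod_eq_of_lt h1, Nat.mod_eq_of_lt h2] at h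
  · have : b = n := le_antisymm hb2 h2
    subst this
    rw [Nat.mod_eq_of_lt h1, Nat.mod_self] at h
    omega
  · have : a = n := le_antisymm ha2 h1
    subst this
    rw [Nat.mod_eq_of_lt h2, Nat.mod_self] at h
    omega
  · omega



/-- for an `n`-tuple of partitions `λ = (λ¹,…,λⁿ)` and a variable `z` of
color `i`, the product `ζ(z/χ_λ) τ₊(z)`, i.e.
`∏_{col □ ≡ i} (zq - χ_□ q⁻¹)/(z - χ_□) · ∏_{col □ ≡ i+1} (z - χ_□)/(zq - χ_□ q⁻¹)
  · (u_{i+1}/q - zq/u_{i+1})`,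
equals the ratio of the product over inner corners of `λ` of color `i+1` of
`(√χ_□/q - zq/√χ_□)` by the product over outer corners of `λ` of color `i` of
`(√χ_□ - z/√χ_□)`. -/
theorem statement8 (n N : ℕ) (hn : 0 < n) (i : ℕ) (hi1 : 1 ≤ i) (hin : i ≤ n)
    (u : ℕ → K) (q qb z : K)
    (hu : ∀ c, u (c + n) = u c * qb⁻¹)
    (hu0 : ∀ k, u k ≠ 0) (hq : q ≠ 0) (hqb : qb ≠ 0)
    (hgen : ∀ (k : ℕ) (s t : ℤ), (u k * q ^ s * qb ^ t) ^ 2 ≠ z)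
    (lam : ℕ → ℕ → ℕ)
    (hpart : ∀ k y, lam k (y + 1) ≤ lam k y)
    (hvan : ∀ k y, N ≤ y → lam k y = 0) :
    (∏ k ∈ Finset.Icc 1 n,
        ∏ y ∈ (Finset.range (N + 1)).filter (fun y => (y + k) % n = i % n),
          ∏ x ∈ Finset.range (lam k y),
            (z * q - (sqw n u q qb k x y i) ^ 2 * q⁻¹) / (z - (sqw n u q qb k x y i) ^ 2)) *
      (∏ k ∈ Finset.Icc 1 n,
        ∏ y ∈ (Finset.range (N + 1)).filter (fun y => (y + k) % n = (i + 1) % n),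
          ∏ x ∈ Finset.range (lam k y),
            (z - (sqw n u q qb k x y (i + 1)) ^ 2) /
              (z * q - (sqw n u q qb k x y (i + 1)) ^ 2 * q⁻¹)) *
      (u (i + 1) * q⁻¹ - z * q * (u (i + 1))⁻¹) =
    (∏ p ∈ ((Finset.Icc 1 n) ×ˢ Finset.range (N + 1)).filter
        (fun p => (p.2 + p.1) % n = (i + 1) % n ∧
          (p.2 = 0 ∨ lam p.1 p.2 < lam p.1 (p.2 - 1))),
        (sqw n u q qb p.1 (lam p.1 p.2) p.2 (i + 1) * q⁻¹ -
          z * q * (sqw n u q qb p.1 (lam p.1 p.2) p.2 (i + 1))⁻¹)) /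
    (∏ p ∈ ((Finset.Icc 1 n) ×ˢ Finset.range (N + 1)).filter
        (fun p => (p.2 + p.1) % n = i % n ∧ lam p.1 (p.2 + 1) < lam p.1 p.2),
        (sqw n u q qb p.1 (lam p.1 p.2 - 1) p.2 i -
          z * (sqw n u q qb p.1 (lam p.1 p.2 - 1) p.2 i)⁻¹)) := by
  classical
  have hz_cc : ∀ (j k y x : ℕ), z * q * q ≠ cc n u qb j k y ^ 2 * q ^ (2 * x) := by
    intro j k y x h
    refine hgen k ((x : ℤ) - 1) (((y : ℤ) + (k : ℤ) - (j : ℤ)) / (n : ℤ)) ?_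
    rw [zpow_sub₀ hq, zpow_one, zpow_natCast]
    simp only [cc] at h
    field_simp at h ⊢
    linear_combination (-1 : K) * h
  have hcc_ne : ∀ j k y : ℕ, cc n u qb j k y ≠ 0 := fun j k y =>
    mul_ne_zero (hu0 k) (zpow_ne_zero _ hqb)
  have sqw_eq : ∀ k x y j : ℕ, sqw n u q qb k x y j = cc n u qb j k y * q ^ x := by
    intro k x y j; simp only [sqw, cc]; ring
  have sqw_sq : ∀ k x y j : ℕ,
      (sqw n u q qb k x y j) ^ 2 = (cc n u qb j k y) ^ 2 * q ^ (2 * x) := by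
    intro k x y j; rw [sqw_eq, mul_pow, pow_mul]; ring
  have cc_succ : ∀ j k y : ℕ, cc n u qb (j + 1) k (y + 1) = cc n u qb j k y := by
    intro j k y
    have h : ((y + 1 : ℕ) : ℤ) + (k : ℤ) - ((j + 1 : ℕ) : ℤ) = (y : ℤ) + (k : ℤ) - (j : ℤ) := by
      push_cast; ring
    simp only [cc, h]
  have hA : ∀ k : ℕ,
      (∏ y ∈ (Finset.range (N + 1)).filter (fun y => (y + k) % n = i % n),
        ∏ x ∈ Finset.range (lam k y),
          (z * q - (sqw n u q qb k x y i) ^ 2 * q⁻¹) / (z - (sqw n u q qb k x y i) ^ 2)) =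
      ∏ y ∈ (Finset.range N).filter (fun y => (y + k) % n = i % n),
        F q z (cc n u qb i k y) (lam k y) := by
    intro k
    have e1 : ∀ y : ℕ,
        (∏ x ∈ Finset.range (lam k y),
          (z * q - (sqw n u q qb k x y i) ^ 2 * q⁻¹) / (z - (sqw n u q qb k x y i) ^ 2)) =
        F q z (cc n u qb i k y) (lam k y) := by
      intro y
      rw [← tele q z _ hq (hz_cc i k y) (lam k y)]
      exact Finset.prod_congr rfl fun x _ => by rw [sqw_sq]
    rw [Finset.prod_congr rfl fun y _ => e1 y]
    refine (Finset.prod_subset ?_ ?_).symm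
    · intro y hy
      rw [Finset.mem_filter, Finset.mem_range] at hy ⊢
      exact ⟨Nat.lt_succ_of_lt hy.1, hy.2⟩
    · intro y hy hy'
      rw [Finset.mem_filter, Finset.mem_range] at hy hy'
      have hyN : y = N := by
        rcases Nat.lt_or_ge y N with h | h
        · exact absurd ⟨h, hy.2⟩ hy'
        · omega
      rw [hyN, hvan k N le_rfl]
      exact F_zero q z _ hq (hz_cc i k N)
  have mod_succ_iff : ∀ y k : ℕ, ((y + 1 + k) % n = (i + 1) % n ↔ (y + k) % n = i % n) := by
    intro y k
    have e : y + 1 + k = (y + k) + 1 := by omega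
    constructor
    · intro h
      rw [e] at h
      exact Nat.ModEq.add_right_cancel' 1 h
    · intro h
      rw [e]
      exact Nat.ModEq.add_right 1 h
  have hSplus : ∀ k : ℕ,
      (Finset.range (N + 1)).filter (fun y => (y + k) % n = (i + 1) % n) =
      (if k % n = (i + 1) % n then
        insert 0 (((Finset.range N).filter (fun y => (y + k) % n = i % n)).image (· + 1))
       else ((Finset.range N).filter (fun y => (y + k) % n = i % n)).image (· + 1)) := by
    intro k
    ext y'
    rw [Finset.mem_filter, Finset.mem_range]
    split_ifs with hk
    · rw [Finset.mem_insert, Finset.mem_image]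
      constructor
      · rintro ⟨hy1, hy2⟩
        match y' with
        | 0 => exact Or.inl rfl
        | y + 1 =>
            refine Or.inr ⟨y, ?_, rfl⟩
            rw [Finset.mem_filter, Finset.mem_range]
            exact ⟨by omega, (mod_succ_iff y k).mp hy2⟩
      · rintro (rfl | ⟨y, hy, rfl⟩)
        · exact ⟨Nat.succ_pos N, by simpa using hk⟩
        · rw [Finset.mem_filter, Finset.mem_range] at hy
          exact ⟨by omega, (mod_succ_iff y k).mpr hy.2⟩
    · rw [Finset.mem_image]
      constructor
      · rintro ⟨hy1, hy2⟩
        match y' with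
        | 0 => exact absurd (by simpa using hy2) hk
        | y + 1 =>
            refine ⟨y, ?_, rfl⟩
            rw [Finset.mem_filter, Finset.mem_range]
            exact ⟨by omega, (mod_succ_iff y k).mp hy2⟩
      · rintro ⟨y, hy, rfl⟩
        rw [Finset.mem_filter, Finset.mem_range] at hy
        exact ⟨by omega, (mod_succ_iff y k).mpr hy.2⟩
  have hB : ∀ k : ℕ,
      (∏ y ∈ (Finset.range (N + 1)).filter (fun y => (y + k) % n = (i + 1) % n),
        ∏ x ∈ Finset.range (lam k y),
          (z - (sqw n u q qb k x y (i + 1)) ^ 2) /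
            (z * q - (sqw n u q qb k x y (i + 1)) ^ 2 * q⁻¹)) =
      (if k % n = (i + 1) % n then (F q z (cc n u qb (i + 1) k 0) (lam k 0))⁻¹ else 1) *
      ∏ y ∈ (Finset.range N).filter (fun y => (y + k) % n = i % n),
        (F q z (cc n u qb i k y) (lam k (y + 1)))⁻¹ := by
    intro k
    have e1 : ∀ y : ℕ,
        (∏ x ∈ Finset.range (lam k y),
          (z - (sqw n u q qb k x y (i + 1)) ^ 2) /
            (z * q - (sqw n u q qb k x y (i + 1)) ^ 2 * q⁻¹)) =
        (F q z (cc n u qb (i + 1) k y) (lam k y))⁻¹ := by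
      intro y
      rw [← tele' q z _ hq (hz_cc (i + 1) k y) (lam k y)]
      exact Finset.prod_congr rfl fun x _ => by rw [sqw_sq]
    rw [Finset.prod_congr rfl fun y _ => e1 y, hSplus k]
    have himg :
        (∏ y ∈ ((Finset.range N).filter (fun y => (y + k) % n = i % n)).image (· + 1),
          (F q z (cc n u qb (i + 1) k y) (lam k y))⁻¹) =
        ∏ y ∈ (Finset.range N).filter (fun y => (y + k) % n = i % n),
          (F q z (cc n u qb i k y) (lam k (y + 1)))⁻¹ := by
      rw [Finset.prod_image (fun a _ b _ h => by omega)]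
      exact Finset.prod_congr rfl fun y _ => by rw [cc_succ]
    split_ifs with hk
    · rw [Finset.prod_insert (by simp), himg]
    · rw [himg, one_mul]
  have hfilter : (Finset.Icc 1 n).filter (fun k => k % n = (i + 1) % n) =
      {if i = n then 1 else i + 1} := by
    ext a
    rw [Finset.mem_filter, Finset.mem_Icc, Finset.mem_singleton]
    split_ifs with hieq
    · constructor
      · rintro ⟨⟨h1, h2⟩, h3⟩
        rw [hieq] at h3
        have h4 : (n + 1) % n = 1 % n := Nat.add_mod_left n 1
        exact mod_inj n hn h1 h2 le_rfl hn (by rw [h3, h4])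
      · rintro rfl
        refine ⟨⟨le_rfl, hn⟩, ?_⟩
        rw [hieq]
        exact (Nat.add_mod_left n 1).symm
    · constructor
      · rintro ⟨⟨h1, h2⟩, h3⟩
        exact mod_inj n hn h1 h2 (by omega) (by omega) h3
      · rintro rfl
        exact ⟨⟨by omega, by omega⟩, rfl⟩
  have htau : (u (i + 1) * q⁻¹ - z * q * (u (i + 1))⁻¹) =
      ∏ k ∈ Finset.Icc 1 n,
        (if k % n = (i + 1) % n then (u (i + 1) * q⁻¹ - z * q * (u (i + 1))⁻¹) else 1) := by
    rw [← Finset.prod_filter, hfilter, Finset.prod_singleton]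
  have hC : (∏ p ∈ ((Finset.Icc 1 n) ×ˢ Finset.range (N + 1)).filter
        (fun p => (p.2 + p.1) % n = (i + 1) % n ∧
          (p.2 = 0 ∨ lam p.1 p.2 < lam p.1 (p.2 - 1))),
        (sqw n u q qb p.1 (lam p.1 p.2) p.2 (i + 1) * q⁻¹ -
          z * q * (sqw n u q qb p.1 (lam p.1 p.2) p.2 (i + 1))⁻¹)) =
      ∏ k ∈ Finset.Icc 1 n,
        ∏ y ∈ (Finset.range (N + 1)).filter
            (fun y => (y + k) % n = (i + 1) % n ∧ (y = 0 ∨ lam k y < lam k (y - 1))),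
          (sqw n u q qb k (lam k y) y (i + 1) * q⁻¹ -
            z * q * (sqw n u q qb k (lam k y) y (i + 1))⁻¹) := by
    rw [Finset.prod_filter, Finset.prod_product]
    exact Finset.prod_congr rfl fun k _ => (Finset.prod_filter _ _).symm
  have hD : (∏ p ∈ ((Finset.Icc 1 n) ×ˢ Finset.range (N + 1)).filter
        (fun p => (p.2 + p.1) % n = i % n ∧ lam p.1 (p.2 + 1) < lam p.1 p.2),
        (sqw n u q qb p.1 (lam p.1 p.2 - 1) p.2 i -
          z * (sqw n u q qb p.1 (lam p.1 p.2 - 1) p.2 i)⁻¹)) =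
      ∏ k ∈ Finset.Icc 1 n,
        ∏ y ∈ (Finset.range (N + 1)).filter
            (fun y => (y + k) % n = i % n ∧ lam k (y + 1) < lam k y),
          (sqw n u q qb k (lam k y - 1) y i - z * (sqw n u q qb k (lam k y - 1) y i)⁻¹) := by
    rw [Finset.prod_filter, Finset.prod_product]
    exact Finset.prod_congr rfl fun k _ => (Finset.prod_filter _ _).symm
  have hCk : ∀ k : ℕ,
      (Finset.range (N + 1)).filter
          (fun y => (y + k) % n = (i + 1) % n ∧ (y = 0 ∨ lam k y < lam k (y - 1))) =
      (if k % n = (i + 1) % n then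
        insert 0 ((((Finset.range N).filter (fun y => (y + k) % n = i % n)).filter
            (fun y => lam k (y + 1) < lam k y)).image (· + 1))
       else (((Finset.range N).filter (fun y => (y + k) % n = i % n)).filter
            (fun y => lam k (y + 1) < lam k y)).image (· + 1)) := by
    intro k
    ext y'
    rw [Finset.mem_filter, Finset.mem_range]
    split_ifs with hk
    · rw [Finset.mem_insert, Finset.mem_image]
      constructor
      · rintro ⟨hy1, hy2, hy3⟩
        match y' with
        | 0 => exact Or.inl rfl
        | y + 1 =>
            refine Or.inr ⟨y, ?_, rfl⟩
            rw [Finset.mem_filter, Finset.mem_filter, Finset.mem_range]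
            have hy3' : lam k (y + 1) < lam k y := by
              rcases hy3 with h | h
              · omega
              · simpa using h
            exact ⟨⟨by omega, (mod_succ_iff y k).mp hy2⟩, hy3'⟩
      · rintro (rfl | ⟨y, hy, rfl⟩)
        · exact ⟨Nat.succ_pos N, by simpa using hk, Or.inl rfl⟩
        · rw [Finset.mem_filter, Finset.mem_filter, Finset.mem_range] at hy
          refine ⟨by omega, (mod_succ_iff y k).mpr hy.1.2, Or.inr ?_⟩
          simpa using hy.2
    · rw [Finset.mem_image]
      constructor
      · rintro ⟨hy1, hy2, hy3⟩
        match y' with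
        | 0 => exact absurd (by simpa using hy2) hk
        | y + 1 =>
            refine ⟨y, ?_, rfl⟩
            rw [Finset.mem_filter, Finset.mem_filter, Finset.mem_range]
            have hy3' : lam k (y + 1) < lam k y := by
              rcases hy3 with h | h
              · omega
              · simpa using h
            exact ⟨⟨by omega, (mod_succ_iff y k).mp hy2⟩, hy3'⟩
      · rintro ⟨y, hy, rfl⟩
        rw [Finset.mem_filter, Finset.mem_filter, Finset.mem_range] at hy
        refine ⟨by omega, (mod_succ_iff y k).mpr hy.1.2, Or.inr ?_⟩
        simpa using hy.2
  have hDk : ∀ k : ℕ,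
      (Finset.range (N + 1)).filter (fun y => (y + k) % n = i % n ∧ lam k (y + 1) < lam k y) =
      ((Finset.range N).filter (fun y => (y + k) % n = i % n)).filter
          (fun y => lam k (y + 1) < lam k y) := by
    intro k
    ext y
    rw [Finset.mem_filter, Finset.mem_range, Finset.mem_filter, Finset.mem_filter,
      Finset.mem_range]
    constructor
    · rintro ⟨h1, h2, h3⟩
      have hyN : y < N := by
        by_contra h
        have e0 : lam k y = 0 := hvan k y (by omega)
        have e1 : lam k (y + 1) = 0 := hvan k (y + 1) (by omega)
        omega
      exact ⟨⟨hyN, h2⟩, h3⟩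
    · rintro ⟨⟨h1, h2⟩, h3⟩
      exact ⟨by omega, h2, h3⟩
  rw [htau]
  have hA' := Finset.prod_congr rfl fun k (_ : k ∈ Finset.Icc 1 n) => hA k
  have hB' := Finset.prod_congr rfl fun k (_ : k ∈ Finset.Icc 1 n) => hB k
  rw [hA', hB', hC, hD, ← Finset.prod_div_distrib, ← Finset.prod_mul_distrib,
    ← Finset.prod_mul_distrib]
  refine Finset.prod_congr rfl fun k hkmem => ?_
  rw [hCk k, hDk k]
  have hpairs :
      (∏ y ∈ (Finset.range N).filter (fun y => (y + k) % n = i % n),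
        F q z (cc n u qb i k y) (lam k y)) *
      (∏ y ∈ (Finset.range N).filter (fun y => (y + k) % n = i % n),
        (F q z (cc n u qb i k y) (lam k (y + 1)))⁻¹) =
      (∏ y ∈ ((Finset.range N).filter (fun y => (y + k) % n = i % n)).filter
          (fun y => lam k (y + 1) < lam k y),
        (sqw n u q qb k (lam k (y + 1)) (y + 1) (i + 1) * q⁻¹ -
          z * q * (sqw n u q qb k (lam k (y + 1)) (y + 1) (i + 1))⁻¹)) /
      (∏ y ∈ ((Finset.range N).filter (fun y => (y + k) % n = i % n)).filter
          (fun y => lam k (y + 1) < lam k y),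
        (sqw n u q qb k (lam k y - 1) y i - z * (sqw n u q qb k (lam k y - 1) y i)⁻¹)) := by
    rw [Finset.prod_filter (fun y => lam k (y + 1) < lam k y)
        (fun y => (sqw n u q qb k (lam k (y + 1)) (y + 1) (i + 1) * q⁻¹ -
          z * q * (sqw n u q qb k (lam k (y + 1)) (y + 1) (i + 1))⁻¹)),
      Finset.prod_filter (fun y => lam k (y + 1) < lam k y)
        (fun y => (sqw n u q qb k (lam k y - 1) y i -
          z * (sqw n u q qb k (lam k y - 1) y i)⁻¹)),
      ← Finset.prod_mul_distrib, ← Finset.prod_div_distrib]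
    refine Finset.prod_congr rfl fun y _ => ?_
    rw [pair q z (cc n u qb i k y) hq (hcc_ne i k y) (hz_cc i k y) (hpart k y)]
    by_cases hd : lam k (y + 1) < lam k y
    · rw [if_pos hd, if_pos hd, if_pos hd, sqw_eq k (lam k (y + 1)) (y + 1) (i + 1),
        sqw_eq k (lam k y - 1) y i, cc_succ]
    · rw [if_neg hd, if_neg hd, if_neg hd, div_one]
  have hkIcc := Finset.mem_Icc.mp hkmem
  by_cases hk0 : k % n = (i + 1) % n
  · simp only [if_pos hk0]
    have hu_cc : u (i + 1) = cc n u qb (i + 1) k 0 := by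
      rcases Nat.lt_or_ge i n with hiltn | hige
      · have hk2 : k = i + 1 := mod_inj n hn hkIcc.1 hkIcc.2 (by omega) (by omega) hk0
        subst hk2
        simp only [cc]
        have e : ((0 : ℕ) : ℤ) + ((i + 1 : ℕ) : ℤ) - ((i + 1 : ℕ) : ℤ) = 0 := by
          push_cast; ring
        rw [e, Int.zero_ediv, zpow_zero, mul_one]
      · have hieq : i = n := le_antisymm hin hige
        have hmod : (n + 1) % n = 1 % n := Nat.add_mod_left n 1
        have hk2 : k = 1 := by
          refine mod_inj n hn hkIcc.1 hkIcc.2 le_rfl hn ?_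
          rw [hk0, hieq, hmod]
        subst hk2
        simp only [cc]
        have e : ((0 : ℕ) : ℤ) + ((1 : ℕ) : ℤ) - ((i + 1 : ℕ) : ℤ) = (-1) * (n : ℤ) := by
          rw [hieq]; push_cast; ring
        rw [e, Int.mul_ediv_cancel _ (by exact_mod_cast hn.ne'), zpow_neg_one, hieq,
          show n + 1 = 1 + n from by omega, hu 1]
    have hrz := rowz q z (cc n u qb (i + 1) k 0) hq (hcc_ne (i + 1) k 0)
      (hz_cc (i + 1) k 0) (lam k 0)
    rw [Finset.prod_insert (by simp), Finset.prod_image (fun a _ b _ h => by omega),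
      mul_div_assoc, ← hpairs, hu_cc, sqw_eq k (lam k 0) 0 (i + 1), ← hrz]
    ring
  · simp only [if_neg hk0, one_mul, mul_one]
    rw [Finset.prod_image (fun a _ b _ h => by omega)]
    exact hpairs

end Statement8
end

section
/- The fixed points of the ℤ/nℤ-action on stable ADHM quadruples are exactly the chainsaw quiver data: a stable quadruple (X, Y, A, B) on V = ⊕_λ V(λ) (generalized eigenspaces of the intertwining g ∈ GL(V)) satisfying g X g⁻¹ = X, g Y g⁻¹ = e^{2πi/n} Y, g A = A δ, B g⁻¹ = e^{2πi/n} δ⁻¹ B has all non-zero eigenspaces among V_k = V(e^{2πik/n}), and the maps decompose as X_k : V_k → V_k, Y_k : V_{k-1} → V_k, A_k : ℂw_k → V_k, B_k : V_{k-1} → ℂw_k. -/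
/-- The generalized eigenspace `⋃_k Ker (G - μ)^k` of an endomorphism `G` for the
eigenvalue `μ`. -/
noncomputable def maxGenEig {V : Type*} [AddCommGroup V] [Module ℂ V]
    (G : Module.End ℂ V) (μ : ℂ) : Submodule ℂ V :=
  ⨆ k : ℕ, LinearMap.ker ((G - μ • (1 : Module.End ℂ V)) ^ k)

section Aux

variable {V : Type*} [AddCommGroup V] [Module ℂ V]

lemma maxGenEig_eq (G : Module.End ℂ V) (μ : ℂ) :
    maxGenEig G μ = G.maxGenEigenspace μ := by
  rw [← Module.End.iSup_genEigenspace_eq]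
  simp_rw [Module.End.genEigenspace_nat]
  rfl

lemma mem_maxGenEig_iff (G : Module.End ℂ V) (μ : ℂ) (v : V) :
    v ∈ maxGenEig G μ ↔ ∃ k : ℕ, ((G - μ • (1 : Module.End ℂ V)) ^ k) v = 0 := by
  rw [maxGenEig_eq]
  exact Module.End.mem_maxGenEigenspace G μ v

lemma twist (G T : Module.End ℂ V) (c μ : ℂ)
    (h : G * T = c • (T * G)) (m : ℕ) :
    (G - (c * μ) • 1) ^ m * T = c ^ m • (T * (G - μ • 1) ^ m) := by
  have h1 : (G - (c * μ) • 1) * T = c • (T * (G - μ • 1)) := by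
    rw [sub_mul, smul_mul_assoc, one_mul, h, mul_sub, smul_sub, mul_smul_comm,
      mul_one, smul_smul]
  induction m with
  | zero => simp
  | succ m ih =>
    calc (G - (c * μ) • 1) ^ (m + 1) * T
        = (G - (c * μ) • 1) * ((G - (c * μ) • 1) ^ m * T) := by
          rw [pow_succ', mul_assoc]
      _ = (G - (c * μ) • 1) * (c ^ m • (T * (G - μ • 1) ^ m)) := by rw [ih]
      _ = c ^ m • (((G - (c * μ) • 1) * T) * (G - μ • 1) ^ m) := by
          rw [mul_smul_comm, mul_assoc]
      _ = c ^ m • ((c • (T * (G - μ • 1))) * (G - μ • 1) ^ m) := by rw [h1]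
      _ = c ^ (m + 1) • (T * (G - μ • 1) ^ (m + 1)) := by
          rw [smul_mul_assoc, smul_smul, mul_assoc, ← pow_succ', ← pow_succ]

lemma maxGenEig_mapsTo (G T : Module.End ℂ V) (c μ : ℂ)
    (h : G * T = c • (T * G)) {v : V} (hv : v ∈ maxGenEig G μ) :
    T v ∈ maxGenEig G (c * μ) := by
  rw [mem_maxGenEig_iff] at hv ⊢
  obtain ⟨m, hm⟩ := hv
  refine ⟨m, ?_⟩
  have := congrArg (fun f : Module.End ℂ V => f v) (twist G T c μ h m)
  simp only [Module.End.mul_apply, LinearMap.smul_apply] at this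
  rw [this, hm, map_zero, smul_zero]

end Aux

/-- a stable ADHM quadruple `(X,Y,A,B)` fixed by the `ℤ/nℤ`-action via an
intertwiner `g ∈ GL(V)` (so `gXg⁻¹ = X`, `gYg⁻¹ = ωY`, `gA = Aδ`, `Bg⁻¹ = ωδ⁻¹B`, with
`ω = e^{2πi/n}` and `δ = diag(ω, …, ωⁿ)`) is exactly a chainsaw quiver datum: all nonzero
generalized eigenspaces of `g` have eigenvalue an `n`-th root of unity `ω^k`, `X` preserves
each `V(μ)`, `Y` maps `V(μ)` to `V(ωμ)`, `A` maps `w_k` into `V(ω^k)`, and `B` maps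
`V(ω^k)` into `ℂ w_{k+1}`. -/
theorem statement18 {V : Type*} [AddCommGroup V] [Module ℂ V] [FiniteDimensional ℂ V]
    (n : ℕ) [NeZero n] (ω : ℂ) (hω : IsPrimitiveRoot ω n)
    (X Y : Module.End ℂ V) (A : (Fin n → ℂ) →ₗ[ℂ] V) (B : V →ₗ[ℂ] (Fin n → ℂ))
    (g : V ≃ₗ[ℂ] V)
    (hmoment : X ∘ₗ Y - Y ∘ₗ X + A ∘ₗ B = 0)
    (hstab : ∀ U : Submodule ℂ V, LinearMap.range A ≤ U →
      (∀ v ∈ U, X v ∈ U) → (∀ v ∈ U, Y v ∈ U) → U = ⊤)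
    (hgX : ∀ v, g (X v) = X (g v))
    (hgY : ∀ v, g (Y v) = ω • Y (g v))
    (hgA : ∀ w : Fin n → ℂ, g (A w) = A (fun kk => ω ^ ((kk : ℕ) + 1) * w kk))
    (hgB : ∀ v : V, ∀ kk : Fin n, ω ^ ((kk : ℕ) + 1) * B v kk = ω * B (g v) kk) :
    (∀ μ : ℂ, maxGenEig (g : V →ₗ[ℂ] V) μ ≠ ⊥ → μ ^ n = 1) ∧
    (∀ μ : ℂ, ∀ v ∈ maxGenEig (g : V →ₗ[ℂ] V) μ, X v ∈ maxGenEig (g : V →ₗ[ℂ] V) μ) ∧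
    (∀ μ : ℂ, ∀ v ∈ maxGenEig (g : V →ₗ[ℂ] V) μ, Y v ∈ maxGenEig (g : V →ₗ[ℂ] V) (ω * μ)) ∧
    (∀ kk : Fin n, A (Pi.single kk 1) ∈ maxGenEig (g : V →ₗ[ℂ] V) (ω ^ ((kk : ℕ) + 1))) ∧
    (∀ kk : Fin n, ∀ v ∈ maxGenEig (g : V →ₗ[ℂ] V) (ω ^ ((kk : ℕ) + 1)),
      ∀ jj : Fin n, jj ≠ kk + 1 → B v jj = 0) := by
  set G : Module.End ℂ V := (g : V →ₗ[ℂ] V) with hG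
  have hωn : ω ^ n = 1 := hω.pow_eq_one
  have hω0 : ω ≠ 0 := hω.ne_zero (NeZero.ne n)
  -- intertwining relations as endomorphism identities
  have hX : G * X = (1 : ℂ) • (X * G) := by
    ext v; simpa [hG] using hgX v
  have hY : G * Y = ω • (Y * G) := by
    ext v; simpa [hG] using hgY v
  -- Part 2 : X preserves each generalized eigenspace
  have partX : ∀ μ : ℂ, ∀ v ∈ maxGenEig G μ, X v ∈ maxGenEig G μ := by
    intro μ v hv
    have := maxGenEig_mapsTo G X 1 μ hX hv
    simpa using this
  -- Part 3 : Y shifts generalized eigenspaces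
  have partY : ∀ μ : ℂ, ∀ v ∈ maxGenEig G μ, Y v ∈ maxGenEig G (ω * μ) :=
    fun μ v hv => maxGenEig_mapsTo G Y ω μ hY hv
  -- Part 4 : images of the coordinate vectors under `A` are eigenvectors
  have partA : ∀ kk : Fin n, A (Pi.single kk 1) ∈ maxGenEig G (ω ^ ((kk : ℕ) + 1)) := by
    intro kk
    have heig : G (A (Pi.single kk 1)) = (ω ^ ((kk : ℕ) + 1)) • A (Pi.single kk 1) := by
      have h1 : (fun jj : Fin n => ω ^ ((jj : ℕ) + 1) * (Pi.single kk 1 : Fin n → ℂ) jj)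
          = (ω ^ ((kk : ℕ) + 1)) • (Pi.single kk 1 : Fin n → ℂ) := by
        funext jj
        by_cases hj : jj = kk
        · subst hj; simp
        · simp [Pi.single_apply, hj]
      have := hgA (Pi.single kk 1)
      rw [h1, map_smul] at this
      exact this
    rw [mem_maxGenEig_iff]
    refine ⟨1, ?_⟩
    simp [heig]
  -- Part 5 : B sends `V(ω^{k+1})` into the `(k+1)`-st coordinate line
  have partB : ∀ kk : Fin n, ∀ v ∈ maxGenEig G (ω ^ ((kk : ℕ) + 1)),
      ∀ jj : Fin n, jj ≠ kk + 1 → B v jj = 0 := by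
    intro kk v hv jj hjj
    set μ : ℂ := ω ^ ((kk : ℕ) + 1) with hμ
    have hBg : ∀ u : V, B (G u) jj = ω ^ (jj : ℕ) * B u jj := by
      intro u
      have h := hgB u jj
      have : ω * B (g u) jj = ω * (ω ^ (jj : ℕ) * B u jj) := by
        rw [← h]; ring
      have := mul_left_cancel₀ hω0 this
      simpa [hG] using this
    have key : ∀ m : ℕ, ∀ u : V,
        B (((G - μ • (1 : Module.End ℂ V)) ^ m) u) jj
          = (ω ^ (jj : ℕ) - μ) ^ m * B u jj := by
      intro m
      induction m with
      | zero => intro u; simp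
      | succ m ih =>
        intro u
        have hstep : ((G - μ • (1 : Module.End ℂ V)) ^ (m + 1)) u
            = ((G - μ • (1 : Module.End ℂ V)) ^ m) ((G - μ • (1 : Module.End ℂ V)) u) := by
          rw [pow_succ, Module.End.mul_apply]
        rw [hstep, ih]
        have : B ((G - μ • (1 : Module.End ℂ V)) u) jj
            = (ω ^ (jj : ℕ) - μ) * B u jj := by
          simp only [LinearMap.sub_apply, LinearMap.smul_apply, Module.End.one_apply,
            map_sub, map_smul, Pi.sub_apply, Pi.smul_apply, smul_eq_mul]
          rw [hBg u]; ring
        rw [this]; ring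
    rw [mem_maxGenEig_iff] at hv
    obtain ⟨m, hm⟩ := hv
    have h0 : (ω ^ (jj : ℕ) - μ) ^ m * B v jj = 0 := by
      rw [← key m v, hm]; simp
    have hne : ω ^ (jj : ℕ) ≠ μ := by
      intro hcontra
      apply hjj
      have h1 : ω ^ (jj : ℕ) = ω ^ ((jj : ℕ) % n) := pow_eq_pow_mod _ hωn
      have h2 : μ = ω ^ (((kk : ℕ) + 1) % n) := by
        rw [hμ]; exact pow_eq_pow_mod _ hωn
      have h3 : (jj : ℕ) % n = ((kk : ℕ) + 1) % n := by
        apply hω.pow_inj (Nat.mod_lt _ (NeZero.pos n)) (Nat.mod_lt _ (NeZero.pos n))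
        rw [← h1, ← h2, hcontra]
      have h4 : (jj : ℕ) % n = (jj : ℕ) := Nat.mod_eq_of_lt jj.isLt
      have h5 : (jj : ℕ) < n := jj.isLt
      have h6 : (kk : ℕ) < n := kk.isLt
      have hn : 0 < n := NeZero.pos n
      apply Fin.ext
      rw [Fin.add_def]
      simp only [Fin.val_one']
      rcases Nat.lt_or_ge 1 n with h | h
      · rw [Nat.mod_eq_of_lt h, ← h3, h4]
      · have hn1 : n = 1 := le_antisymm h hn
        subst hn1
        simp [Nat.mod_one]
    have : B v jj = 0 := by
      rcases mul_eq_zero.mp h0 with h | h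
      · exact absurd h (pow_ne_zero m (sub_ne_zero_of_ne hne))
      · exact h
    exact this
  -- Part 1 : only n-th roots of unity occur as eigenvalues
  have part1 : ∀ μ : ℂ, maxGenEig G μ ≠ ⊥ → μ ^ n = 1 := by
    intro μ hμbot
    by_contra hμn
    -- the span of the root-of-unity generalized eigenspaces
    set U : Submodule ℂ V := ⨆ k : Fin n, maxGenEig G (ω ^ ((k : ℕ) + 1)) with hU
    have hle : ∀ k : Fin n, maxGenEig G (ω ^ ((k : ℕ) + 1)) ≤ U := fun k => by rw [hU]; exact le_iSup (fun k : Fin n => maxGenEig G (ω ^ ((k : ℕ) + 1))) k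
    have hA : LinearMap.range A ≤ U := by
      rintro _ ⟨w, rfl⟩
      have hw : w = ∑ i : Fin n, w i • (Pi.single i 1 : Fin n → ℂ) := by
        funext j
        simp [Pi.single_apply]
      rw [hw, map_sum]
      apply Submodule.sum_mem
      intro i _
      rw [map_smul]
      exact Submodule.smul_mem _ _ (hle i (partA i))
    have hXU : ∀ v ∈ U, X v ∈ U := by
      intro v hv
      refine Submodule.iSup_induction (motive := fun x => X x ∈ U) _ hv ?_ ?_ ?_
      · intro k x hx
        exact hle k (partX _ x hx)
      · simp
      · intro x y hx hy
        rw [map_add]; exact Submodule.add_mem _ hx hy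
    have hYU : ∀ v ∈ U, Y v ∈ U := by
      intro v hv
      refine Submodule.iSup_induction (motive := fun x => Y x ∈ U) _ hv ?_ ?_ ?_
      · intro k x hx
        have h1 : Y x ∈ maxGenEig G (ω * ω ^ ((k : ℕ) + 1)) := partY _ x hx
        have h2 : ω * ω ^ ((k : ℕ) + 1) = ω ^ (((k + 1 : Fin n) : ℕ) + 1) := by
          rw [← pow_succ']
          rw [pow_eq_pow_mod ((k : ℕ) + 1 + 1) hωn,
            pow_eq_pow_mod (((k + 1 : Fin n) : ℕ) + 1) hωn]
          congr 1
          rw [Fin.add_def]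
          simp only [Fin.val_one']
          have hn : 0 < n := NeZero.pos n
          rcases Nat.lt_or_ge 1 n with h | h
          · rw [Nat.mod_eq_of_lt h, Nat.mod_add_mod]
          · have hn1 : n = 1 := le_antisymm h hn
            subst hn1
            simp [Nat.mod_one]
        rw [h2] at h1
        exact hle (k + 1) h1
      · simp
      · intro x y hx hy
        rw [map_add]; exact Submodule.add_mem _ hx hy
    have hUtop : U = ⊤ := hstab U hA hXU hYU
    -- independence of generalized eigenspaces
    have hindep := Module.End.independent_maxGenEigenspace G
    have hdisj : Disjoint (G.maxGenEigenspace μ)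
        (⨆ (ν : ℂ) (_ : ν ≠ μ), G.maxGenEigenspace ν) := hindep μ
    have hUle : U ≤ ⨆ (ν : ℂ) (_ : ν ≠ μ), G.maxGenEigenspace ν := by
      refine iSup_le fun k => ?_
      rw [maxGenEig_eq]
      have hne : ω ^ ((k : ℕ) + 1) ≠ μ := by
        intro hcontra
        apply hμn
        rw [← hcontra, ← pow_mul, mul_comm, pow_mul, hωn, one_pow]
      exact le_iSup₂_of_le (ω ^ ((k : ℕ) + 1)) hne le_rfl
    have htop : (⊤ : Submodule ℂ V) ≤ ⨆ (ν : ℂ) (_ : ν ≠ μ), G.maxGenEigenspace ν :=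
      hUtop ▸ hUle
    have hbot : G.maxGenEigenspace μ = ⊥ := disjoint_top.mp (hdisj.mono_right htop)
    exact hμbot (by rw [maxGenEig_eq]; exact hbot)
  exact ⟨part1, partX, partY, partA, partB⟩
end
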